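/- Let α, β, γ, δ, a, b be real numbers. If Y(a)·Z(π−α)·Y(a)·Z(π−β)·Y(a)·Z(π−γ)·Y(b)·Z(π−δ) equals the 3×3 identity matrix and sin a ≠ 0, then (1 − cos α)·sin δ·cos a = sin α·cos δ + sin γ, and (1 − cos β)·sin γ·cos a = sin β·cos γ + sin δ. -/
import Mathlib


open Real

/-- Rotation about the `y`-axis by angle `t`. -/
noncomputable def Yrot (t : ℝ) : Matrix (Fin 3) (Fin 3) ℝ :=
  !![Real.cos t, 0, Real.sin t; 0, 1, 0; -Real.sin t, 0, Real.cos t]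

/-- Rotation about the `z`-axis by angle `t`. -/
noncomputable def Zrot (t : ℝ) : Matrix (Fin 3) (Fin 3) ℝ :=
  !![Real.cos t, -Real.sin t, 0; Real.sin t, Real.cos t, 0; 0, 0, 1]

lemma Zadd (s t : ℝ) : Zrot s * Zrot t = Zrot (s + t) := by
  ext i j
  fin_cases i <;> fin_cases j <;>
    simp [Zrot, Matrix.mul_apply, Fin.sum_univ_succ, Real.cos_add, Real.sin_add, Matrix.vecHead, Matrix.vecTail] <;> ring

lemma Yadd (s t : ℝ) : Yrot s * Yrot t = Yrot (s + t) := by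
  ext i j
  fin_cases i <;> fin_cases j <;>
    simp [Yrot, Matrix.mul_apply, Fin.sum_univ_succ, Real.cos_add, Real.sin_add, Matrix.vecHead, Matrix.vecTail] <;> ring

lemma Zzero : Zrot 0 = 1 := by
  ext i j; fin_cases i <;> fin_cases j <;> simp [Zrot, Matrix.one_apply, Matrix.vecHead, Matrix.vecTail]

lemma Yzero : Yrot 0 = 1 := by
  ext i j; fin_cases i <;> fin_cases j <;> simp [Yrot, Matrix.one_apply, Matrix.vecHead, Matrix.vecTail]


set_option maxHeartbeats 8000000 in
set_option maxRecDepth 4000 in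
theorem stmt_6 (α β γ δ a b : ℝ)
    (h : Yrot a * Zrot (π - α) * Yrot a * Zrot (π - β) * Yrot a * Zrot (π - γ) *
      Yrot b * Zrot (π - δ) = 1)
    (ha : Real.sin a ≠ 0) :
    (1 - Real.cos α) * Real.sin δ * Real.cos a = Real.sin α * Real.cos δ + Real.sin γ ∧
    (1 - Real.cos β) * Real.sin γ * Real.cos a = Real.sin β * Real.cos γ + Real.sin δ := by
  have hz4 : Zrot (π - δ) * Zrot (δ - π) = 1 := by
    rw [Zadd, show π - δ + (δ - π) = (0:ℝ) by ring, Zzero]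
  have hz3 : Zrot (π - γ) * Zrot (γ - π) = 1 := by
    rw [Zadd, show π - γ + (γ - π) = (0:ℝ) by ring, Zzero]
  have hyb : Yrot b * Yrot (-b) = 1 := by
    rw [Yadd, show b + -b = (0:ℝ) by ring, Yzero]
  -- first relation : six-factor product equals Z(δ-π) * Y(-b)
  have h2 : Yrot a * Zrot (π - α) * Yrot a * Zrot (π - β) * Yrot a * Zrot (π - γ) =
      Zrot (δ - π) * Yrot (-b) := by
    calc Yrot a * Zrot (π - α) * Yrot a * Zrot (π - β) * Yrot a * Zrot (π - γ)
        = Yrot a * Zrot (π - α) * Yrot a * Zrot (π - β) * Yrot a * Zrot (π - γ) *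
            ((Yrot b * (Zrot (π - δ) * Zrot (δ - π))) * Yrot (-b)) := by
          rw [hz4, mul_one, hyb, mul_one]
      _ = (Yrot a * Zrot (π - α) * Yrot a * Zrot (π - β) * Yrot a * Zrot (π - γ) *
            Yrot b * Zrot (π - δ)) * (Zrot (δ - π) * Yrot (-b)) := by
          simp only [mul_assoc]
      _ = Zrot (δ - π) * Yrot (-b) := by rw [h, one_mul]
  -- second relation : Z(π-δ) * five-factor product equals Y(-b) * Z(γ-π)
  have hcomm : Zrot (π - δ) * (Yrot a * Zrot (π - α) * Yrot a * Zrot (π - β) * Yrot a *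
      Zrot (π - γ) * Yrot b) = 1 := mul_eq_one_comm.mp h
  have h3 : Zrot (π - δ) * (Yrot a * Zrot (π - α) * Yrot a * Zrot (π - β) * Yrot a) =
      Yrot (-b) * Zrot (γ - π) := by
    calc Zrot (π - δ) * (Yrot a * Zrot (π - α) * Yrot a * Zrot (π - β) * Yrot a)
        = Zrot (π - δ) * (Yrot a * Zrot (π - α) * Yrot a * Zrot (π - β) * Yrot a) *
            ((Zrot (π - γ) * (Yrot b * Yrot (-b))) * Zrot (γ - π)) := by
          rw [hyb, mul_one, hz3, mul_one]
      _ = (Zrot (π - δ) * (Yrot a * Zrot (π - α) * Yrot a * Zrot (π - β) * Yrot a *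
            Zrot (π - γ) * Yrot b)) * (Yrot (-b) * Zrot (γ - π)) := by
          simp only [mul_assoc]
      _ = Yrot (-b) * Zrot (γ - π) := by rw [hcomm, one_mul]
  have he1 := congrFun (congrFun h2 0) 1
  have he2 := congrFun (congrFun h2 1) 1
  have he3 := congrFun (congrFun h2 2) 1
  have hf1 := congrFun (congrFun h3 1) 0
  have hf2 := congrFun (congrFun h3 1) 1
  have hf3 := congrFun (congrFun h3 1) 2
  simp only [Yrot, Zrot, Matrix.mul_apply, Fin.sum_univ_succ, Fin.sum_univ_zero,
    Matrix.cons_val', Matrix.cons_val_zero, Matrix.cons_val_one, Matrix.cons_val_succ, Matrix.cons_val_two, Matrix.of_apply, Matrix.head_cons,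
    Matrix.head_fin_const, Matrix.empty_val', Matrix.cons_val_fin_one, Matrix.vecHead,
    Matrix.vecTail, Real.sin_pi_sub, Real.cos_pi_sub, Real.sin_sub, Real.cos_sub,
    Real.sin_pi, Real.cos_pi, Real.sin_neg, Real.cos_neg, Function.comp,
    mul_zero, zero_mul, add_zero, zero_add, mul_one, one_mul, neg_zero, neg_neg,
    mul_neg, neg_mul, sub_zero, zero_sub] at he1
  simp only [Yrot, Zrot, Matrix.mul_apply, Fin.sum_univ_succ, Fin.sum_univ_zero,
    Matrix.cons_val', Matrix.cons_val_zero, Matrix.cons_val_one, Matrix.cons_val_succ, Matrix.cons_val_two, Matrix.of_apply, Matrix.head_cons,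
    Matrix.head_fin_const, Matrix.empty_val', Matrix.cons_val_fin_one, Matrix.vecHead,
    Matrix.vecTail, Real.sin_pi_sub, Real.cos_pi_sub, Real.sin_sub, Real.cos_sub,
    Real.sin_pi, Real.cos_pi, Real.sin_neg, Real.cos_neg, Function.comp,
    mul_zero, zero_mul, add_zero, zero_add, mul_one, one_mul, neg_zero, neg_neg,
    mul_neg, neg_mul, sub_zero, zero_sub] at he2
  simp only [Yrot, Zrot, Matrix.mul_apply, Fin.sum_univ_succ, Fin.sum_univ_zero,
    Matrix.cons_val', Matrix.cons_val_zero, Matrix.cons_val_one, Matrix.cons_val_succ, Matrix.cons_val_two, Matrix.of_apply, Matrix.head_cons,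
    Matrix.head_fin_const, Matrix.empty_val', Matrix.cons_val_fin_one, Matrix.vecHead,
    Matrix.vecTail, Real.sin_pi_sub, Real.cos_pi_sub, Real.sin_sub, Real.cos_sub,
    Real.sin_pi, Real.cos_pi, Real.sin_neg, Real.cos_neg, Function.comp,
    mul_zero, zero_mul, add_zero, zero_add, mul_one, one_mul, neg_zero, neg_neg,
    mul_neg, neg_mul, sub_zero, zero_sub] at he3
  simp only [Yrot, Zrot, Matrix.mul_apply, Fin.sum_univ_succ, Fin.sum_univ_zero,
    Matrix.cons_val', Matrix.cons_val_zero, Matrix.cons_val_one, Matrix.cons_val_succ, Matrix.cons_val_two, Matrix.of_apply, Matrix.head_cons,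
    Matrix.head_fin_const, Matrix.empty_val', Matrix.cons_val_fin_one, Matrix.vecHead,
    Matrix.vecTail, Real.sin_pi_sub, Real.cos_pi_sub, Real.sin_sub, Real.cos_sub,
    Real.sin_pi, Real.cos_pi, Real.sin_neg, Real.cos_neg, Function.comp,
    mul_zero, zero_mul, add_zero, zero_add, mul_one, one_mul, neg_zero, neg_neg,
    mul_neg, neg_mul, sub_zero, zero_sub] at hf1
  simp only [Yrot, Zrot, Matrix.mul_apply, Fin.sum_univ_succ, Fin.sum_univ_zero,
    Matrix.cons_val', Matrix.cons_val_zero, Matrix.cons_val_one, Matrix.cons_val_succ, Matrix.cons_val_two, Matrix.of_apply, Matrix.head_cons,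
    Matrix.head_fin_const, Matrix.empty_val', Matrix.cons_val_fin_one, Matrix.vecHead,
    Matrix.vecTail, Real.sin_pi_sub, Real.cos_pi_sub, Real.sin_sub, Real.cos_sub,
    Real.sin_pi, Real.cos_pi, Real.sin_neg, Real.cos_neg, Function.comp,
    mul_zero, zero_mul, add_zero, zero_add, mul_one, one_mul, neg_zero, neg_neg,
    mul_neg, neg_mul, sub_zero, zero_sub] at hf2
  simp only [Yrot, Zrot, Matrix.mul_apply, Fin.sum_univ_succ, Fin.sum_univ_zero,
    Matrix.cons_val', Matrix.cons_val_zero, Matrix.cons_val_one, Matrix.cons_val_succ, Matrix.cons_val_two, Matrix.of_apply, Matrix.head_cons,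
    Matrix.head_fin_const, Matrix.empty_val', Matrix.cons_val_fin_one, Matrix.vecHead,
    Matrix.vecTail, Real.sin_pi_sub, Real.cos_pi_sub, Real.sin_sub, Real.cos_sub,
    Real.sin_pi, Real.cos_pi, Real.sin_neg, Real.cos_neg, Function.comp,
    mul_zero, zero_mul, add_zero, zero_add, mul_one, one_mul, neg_zero, neg_neg,
    mul_neg, neg_mul, sub_zero, zero_sub] at hf3
  have pa := Real.sin_sq_add_cos_sq a
  have p1 := Real.sin_sq_add_cos_sq α
  have p2 := Real.sin_sq_add_cos_sq β
  constructor
  · refine mul_left_cancel₀ ha ?_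
    linear_combination
      (-(Real.sin a * (1 - Real.cos α) * Real.cos a)) * he1 +
      (-(Real.sin a * Real.sin α)) * he2 +
      (-(Real.cos α * Real.sin a ^ 2 + Real.cos a ^ 2)) * he3 +
      (Real.sin a * Real.sin α ^ 2 * Real.sin γ
        + Real.sin a * Real.cos α * Real.sin α * Real.cos β * Real.cos γ
        + Real.sin a * Real.cos α ^ 2 * Real.sin γ
        + Real.sin a ^ 3 * Real.cos α ^ 2 * Real.sin γ
        - Real.cos a * Real.sin a * Real.sin β * Real.cos γ
        - Real.cos a * Real.sin a * Real.cos α * Real.sin α * Real.sin β * Real.sin γ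
        + Real.cos a * Real.sin a * Real.cos α ^ 2 * Real.sin β * Real.cos γ
        + Real.cos a ^ 2 * Real.sin a * Real.sin γ
        - Real.cos a ^ 2 * Real.sin a * Real.cos β * Real.sin γ
        + Real.cos a ^ 2 * Real.sin a * Real.cos α ^ 2 * Real.cos β * Real.sin γ) * pa +
      (Real.sin a * Real.sin γ + Real.cos a * Real.sin a * Real.sin β * Real.cos γ
        - Real.cos a ^ 2 * Real.sin a * Real.sin γ
        + Real.cos a ^ 2 * Real.sin a * Real.cos β * Real.sin γ) * p1
  · refine mul_left_cancel₀ ha ?_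
    linear_combination
      (Real.sin a * (1 - Real.cos β) * Real.cos a) * hf1 +
      (-(Real.sin a * Real.sin β)) * hf2 +
      (-Real.cos β - Real.cos a ^ 2 + Real.cos a ^ 2 * Real.cos β) * hf3 +
      (Real.sin a * Real.sin β ^ 2 * Real.sin δ
        + Real.sin a * Real.cos β ^ 2 * Real.sin δ
        - Real.cos a * Real.sin a * Real.sin α * Real.cos δ
        + Real.cos a * Real.sin a * Real.sin α * Real.cos β * Real.cos δ
        + Real.cos a ^ 2 * Real.sin a * Real.sin δ
        - Real.cos a ^ 2 * Real.sin a * Real.cos β * Real.sin δ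
        - Real.cos a ^ 2 * Real.sin a * Real.cos α * Real.sin δ
        + Real.cos a ^ 2 * Real.sin a * Real.cos α * Real.cos β * Real.sin δ) * pa +
      (Real.sin a * Real.sin δ + Real.cos a * Real.sin a * Real.sin α * Real.cos δ
        - Real.cos a ^ 2 * Real.sin a * Real.sin δ
        + Real.cos a ^ 2 * Real.sin a * Real.cos α * Real.sin δ) * p2
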